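/- The product x_α x_β = (β+p) x_{α+β} + μ x_{α+β+θ} on the ℂ-vector space with basis {x_α | α ∈ ℤ}, where p, μ ∈ ℂ and θ ∈ ℤ are fixed, defines a Novikov algebra structure, i.e. it satisfies (ab)c − a(bc) = (ba)c − b(ac) and (ab)c = (ac)b. -/

import Mathlib

/-- The Witt type product on the free `ℂ`-module with basis `{x_α | α ∈ ℤ}`
(modelled as `ℤ →₀ ℂ`, `x_α = single α 1`):
`x_α x_β = (β+p) x_{α+β} + μ x_{α+β+θ}`. -/
noncomputable def wittMul (p μ : ℂ) (θ : ℤ) (f g : ℤ →₀ ℂ) : ℤ →₀ ℂ :=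
  f.sum fun α x => g.sum fun β y =>
    Finsupp.single (α + β) (x * y * ((β : ℂ) + p))
      + Finsupp.single (α + β + θ) (x * y * μ)

lemma wittMul_single_single (p μ : ℂ) (θ : ℤ) (α β : ℤ) (x y : ℂ) :
    wittMul p μ θ (Finsupp.single α x) (Finsupp.single β y)
      = Finsupp.single (α + β) (x * y * ((β : ℂ) + p))
          + Finsupp.single (α + β + θ) (x * y * μ) := by
  unfold wittMul
  rw [Finsupp.sum_single_index, Finsupp.sum_single_index] <;> simp

lemma wittMul_zero_left (p μ : ℂ) (θ : ℤ) (g : ℤ →₀ ℂ) : wittMul p μ θ 0 g = 0 := by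
  simp [wittMul]

lemma wittMul_zero_right (p μ : ℂ) (θ : ℤ) (f : ℤ →₀ ℂ) : wittMul p μ θ f 0 = 0 := by
  simp [wittMul]

lemma wittMul_add_left (p μ : ℂ) (θ : ℤ) (f g h : ℤ →₀ ℂ) :
    wittMul p μ θ (f + g) h = wittMul p μ θ f h + wittMul p μ θ g h := by
  unfold wittMul
  rw [Finsupp.sum_add_index] <;> intros <;>
    simp [add_mul, Finsupp.single_add, Finsupp.sum_add] <;> abel

lemma wittMul_add_right (p μ : ℂ) (θ : ℤ) (f g h : ℤ →₀ ℂ) :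
    wittMul p μ θ f (g + h) = wittMul p μ θ f g + wittMul p μ θ f h := by
  unfold wittMul
  rw [← Finsupp.sum_add]
  refine Finsupp.sum_congr fun α ha => ?_
  rw [Finsupp.sum_add_index] <;> intros <;> simp [mul_add, add_mul, Finsupp.single_add]
  abel

lemma single_mul_eq_smul (n : ℤ) (c d : ℂ) :
    Finsupp.single n (c * d) = (c * d) • Finsupp.single n (1:ℂ) := by
  rw [Finsupp.smul_single, smul_eq_mul, mul_one]

lemma wittMul_leftSym_single (p μ : ℂ) (θ α β γ : ℤ) (x y z : ℂ) :
    wittMul p μ θ (wittMul p μ θ (Finsupp.single α x) (Finsupp.single β y)) (Finsupp.single γ z)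
      - wittMul p μ θ (Finsupp.single α x) (wittMul p μ θ (Finsupp.single β y) (Finsupp.single γ z))
    = wittMul p μ θ (wittMul p μ θ (Finsupp.single β y) (Finsupp.single α x)) (Finsupp.single γ z)
      - wittMul p μ θ (Finsupp.single β y) (wittMul p μ θ (Finsupp.single α x) (Finsupp.single γ z)) := by
  simp only [wittMul_single_single, wittMul_add_left, wittMul_add_right, wittMul_single_single]
  simp only [single_mul_eq_smul]
  ring_nf
  module

lemma wittMul_rightComm_single (p μ : ℂ) (θ α β γ : ℤ) (x y z : ℂ) :
    wittMul p μ θ (wittMul p μ θ (Finsupp.single α x) (Finsupp.single β y)) (Finsupp.single γ z)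
    = wittMul p μ θ (wittMul p μ θ (Finsupp.single α x) (Finsupp.single γ z)) (Finsupp.single β y) := by
  simp only [wittMul_single_single, wittMul_add_left, wittMul_add_right, wittMul_single_single]
  simp only [single_mul_eq_smul]
  ring_nf
  module

lemma wittMul_leftSym (p μ : ℂ) (θ : ℤ) (a b c : ℤ →₀ ℂ) :
    wittMul p μ θ (wittMul p μ θ a b) c - wittMul p μ θ a (wittMul p μ θ b c)
      = wittMul p μ θ (wittMul p μ θ b a) c - wittMul p μ θ b (wittMul p μ θ a c) := by
  induction a using Finsupp.induction_linear with
  | zero => simp [wittMul_zero_left, wittMul_zero_right]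
  | add f g hf hg =>
      simp only [wittMul_add_left, wittMul_add_right]
      rw [add_sub_add_comm, add_sub_add_comm, hf, hg]
  | single α x =>
    induction b using Finsupp.induction_linear with
    | zero => simp [wittMul_zero_left, wittMul_zero_right]
    | add f g hf hg =>
        simp only [wittMul_add_left, wittMul_add_right]
        rw [add_sub_add_comm, add_sub_add_comm, hf, hg]
    | single β y =>
      induction c using Finsupp.induction_linear with
      | zero => simp [wittMul_zero_left, wittMul_zero_right]
      | add f g hf hg =>
          simp only [wittMul_add_left, wittMul_add_right]
          rw [add_sub_add_comm, add_sub_add_comm, hf, hg]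
      | single γ z => exact wittMul_leftSym_single p μ θ α β γ x y z

lemma wittMul_rightComm (p μ : ℂ) (θ : ℤ) (a b c : ℤ →₀ ℂ) :
    wittMul p μ θ (wittMul p μ θ a b) c = wittMul p μ θ (wittMul p μ θ a c) b := by
  induction a using Finsupp.induction_linear with
  | zero => simp [wittMul_zero_left, wittMul_zero_right]
  | add f g hf hg => simp only [wittMul_add_left, wittMul_add_right, hf, hg]
  | single α x =>
    induction b using Finsupp.induction_linear with
    | zero => simp [wittMul_zero_left, wittMul_zero_right]
    | add f g hf hg => simp only [wittMul_add_left, wittMul_add_right, hf, hg]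
    | single β y =>
      induction c using Finsupp.induction_linear with
      | zero => simp [wittMul_zero_left, wittMul_zero_right]
      | add f g hf hg => simp only [wittMul_add_left, wittMul_add_right, hf, hg]
      | single γ z => exact wittMul_rightComm_single p μ θ α β γ x y z

/-- The Witt type product is a Novikov algebra structure: it satisfies
left-symmetry `(ab)c − a(bc) = (ba)c − b(ac)` and right-commutativity `(ab)c = (ac)b`. -/
theorem stmt4 (p μ : ℂ) (θ : ℤ) :
    (∀ a b c : ℤ →₀ ℂ,
      wittMul p μ θ (wittMul p μ θ a b) c - wittMul p μ θ a (wittMul p μ θ b c)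
        = wittMul p μ θ (wittMul p μ θ b a) c - wittMul p μ θ b (wittMul p μ θ a c)) ∧
    (∀ a b c : ℤ →₀ ℂ,
      wittMul p μ θ (wittMul p μ θ a b) c = wittMul p μ θ (wittMul p μ θ a c) b) := by
  exact ⟨wittMul_leftSym p μ θ, wittMul_rightComm p μ θ⟩
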